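/- arXiv:0912.5095 — 2 statements merged into one kernel-verified Lean document; each statement's English description precedes it below -/
import Mathlib

section
/- There exists a constant a > 0 such that for all real x, y, |1 + e^{ix} + e^{iy}|² ≥ a·(|4cos²x − 1|² + |4cos²y − 1|²). -/
open Complex

lemma two_var_ineq (c d : ℝ) (hc : c^2 ≤ 1) (hd : d^2 ≤ 1) :
    (1/20)*((2*c+1)^2+(2*d+1)^2) ≤ (1+c+d)^2+(c+d)^2*(c-d)^2/4 := by
  nlinarith [sq_nonneg (c-d), sq_nonneg (c+d+1), sq_nonneg ((c+d)*(c-d)),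
    sq_nonneg ((c-d)*(c+d+1)), sq_nonneg ((2*c+1)*(2*d+1)),
    mul_nonneg (mul_nonneg (by nlinarith : (0:ℝ) ≤ 1-c) (by nlinarith : (0:ℝ) ≤ 1-d)) (sq_nonneg (c-d)),
    mul_nonneg (mul_nonneg (by nlinarith : (0:ℝ) ≤ 1+c) (by nlinarith : (0:ℝ) ≤ 1+d)) (sq_nonneg (c-d)),
    sq_nonneg (c+d)]

lemma key4 (c d s t : ℝ) (hc : c^2+s^2=1) (hd : d^2+t^2=1) :
    (1/20)*((2*c+1)^2+(2*d+1)^2) ≤ (1+c+d)^2+(s+t)^2 := by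
  have hc1 : c^2 ≤ 1 := by nlinarith [sq_nonneg s]
  have hd1 : d^2 ≤ 1 := by nlinarith [sq_nonneg t]
  have hst : (s-t)^2 ≤ 4 := by nlinarith [sq_nonneg c, sq_nonneg d, sq_nonneg (s+t)]
  have hw : (c+d)^2*(c-d)^2 ≤ 4*(s+t)^2 := by
    have h1 : (s+t)^2*(s-t)^2 = (c+d)^2*(c-d)^2 := by nlinarith
    nlinarith [sq_nonneg (s+t), mul_nonneg (sq_nonneg (s+t)) (by linarith : (0:ℝ) ≤ 4-(s-t)^2)]
  have h2 := two_var_ineq c d hc1 hd1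
  linarith

lemma key5 (c d s t : ℝ) (hc : c^2+s^2=1) (hd : d^2+t^2=1) :
    (1/180)*((4*c^2-1)^2+(4*d^2-1)^2) ≤ (1+c+d)^2+(s+t)^2 := by
  have hc1 : c^2 ≤ 1 := by nlinarith [sq_nonneg s]
  have hd1 : d^2 ≤ 1 := by nlinarith [sq_nonneg t]
  have h1 : (4*c^2-1)^2 ≤ 9*(2*c+1)^2 := by
    nlinarith [mul_nonneg (by nlinarith : (0:ℝ) ≤ 9-(2*c-1)^2) (sq_nonneg (2*c+1))]
  have h2 : (4*d^2-1)^2 ≤ 9*(2*d+1)^2 := by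
    nlinarith [mul_nonneg (by nlinarith : (0:ℝ) ≤ 9-(2*d-1)^2) (sq_nonneg (2*d+1))]
  have h3 := key4 c d s t hc hd
  linarith

theorem phi_lower_bound :
    ∃ a : ℝ, 0 < a ∧ ∀ x y : ℝ,
      ‖1 + Complex.exp (Complex.I * x) + Complex.exp (Complex.I * y)‖ ^ 2 ≥
        a * (|4 * Real.cos x ^ 2 - 1| ^ 2 + |4 * Real.cos y ^ 2 - 1| ^ 2) := by
  refine ⟨1/180, by norm_num, fun x y => ?_⟩
  set z : ℂ := 1 + Complex.exp (Complex.I * x) + Complex.exp (Complex.I * y) with hz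
  have hx : Complex.I * (x:ℂ) = (x:ℂ) * Complex.I := mul_comm _ _
  have hy : Complex.I * (y:ℂ) = (y:ℂ) * Complex.I := mul_comm _ _
  have hre : z.re = 1 + Real.cos x + Real.cos y := by
    simp [hz, hx, hy, Complex.exp_mul_I, Complex.cos_ofReal_re, Complex.sin_ofReal_re]
  have him : z.im = Real.sin x + Real.sin y := by
    simp [hz, hx, hy, Complex.exp_mul_I, Complex.cos_ofReal_re, Complex.sin_ofReal_re]
  have habs : ‖z‖ ^ 2 = (1 + Real.cos x + Real.cos y)^2 + (Real.sin x + Real.sin y)^2 := by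
    rw [Complex.sq_norm, Complex.normSq_apply, hre, him]; ring
  have h1 := key5 (Real.cos x) (Real.cos y) (Real.sin x) (Real.sin y)
    (by rw [← Real.sin_sq_add_cos_sq x]; ring) (by rw [← Real.sin_sq_add_cos_sq y]; ring)
  rw [habs, _root_.sq_abs, _root_.sq_abs]
  calc (1/180) * ((4 * Real.cos x ^ 2 - 1) ^ 2 + (4 * Real.cos y ^ 2 - 1) ^ 2)
      ≤ (1 + Real.cos x + Real.cos y)^2 + (Real.sin x + Real.sin y)^2 := by
        have : (4 * Real.cos x ^ 2 - 1) = (4 * (Real.cos x)^2 - 1) := by ring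
        linarith [h1]
    _ = _ := by ring
end

section
/- Define z_α = Σ_{k=1}^n (1/3)^k e^{iπ(1/2 + (2/3)α_k)} for α ∈ {−1,0,1}^n. Then for distinct α, β ∈ {−1,0,1}^n, the discs B(z_α, 3^{−n}) and B(z_β, 3^{−n}) with the same radius 3^{−n} have disjoint interiors provided |z_α − z_β| ≥ 2·3^{−n}; moreover |z_α − z_β| ≥ √3·3^{−j}·(1 − Σ_{k=1}^∞ 3^{−k}) where j is the first index where α and β differ — in particular z_α ≠ z_β for α ≠ β. -/
open Real Complex

noncomputable def zpt (n : ℕ) (α : Fin n → ℤ) : ℂ :=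
  ∑ k : Fin n, ((1:ℂ)/3) ^ ((k:ℕ) + 1) *
    Complex.exp (Complex.I * π * (1/2 + (2/3) * (α k : ℂ)))

noncomputable def Epc (a : ℤ) : ℂ :=
  Complex.exp (Complex.I * π * (1/2 + (2/3) * (a : ℂ)))

lemma Epc_eq (a : ℤ) : Epc a =
    (Real.cos (π * (1/2 + (2/3) * (a:ℝ))) : ℂ) + (Real.sin (π * (1/2 + (2/3) * (a:ℝ))) : ℂ) * Complex.I := by
  rw [Epc]
  rw [show Complex.I * π * (1/2 + (2/3) * (a : ℂ)) = ((π * (1/2 + (2/3) * (a:ℝ)) : ℝ) : ℂ) * Complex.I by push_cast; ring]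
  rw [Complex.exp_mul_I]
  push_cast
  ring

lemma Epc_neg_one : Epc (-1) = ((Real.sqrt 3 / 2 : ℝ) : ℂ) + ((-(1/2) : ℝ) : ℂ) * Complex.I := by
  rw [Epc_eq]
  have h : π * (1/2 + (2/3) * ((-1 : ℤ):ℝ)) = -(π/6) := by push_cast; ring
  rw [h, Real.cos_neg, Real.sin_neg, Real.cos_pi_div_six, Real.sin_pi_div_six]

lemma Epc_zero : Epc 0 = ((0 : ℝ) : ℂ) + ((1 : ℝ) : ℂ) * Complex.I := by
  rw [Epc_eq]
  have h : π * (1/2 + (2/3) * ((0 : ℤ):ℝ)) = π/2 := by push_cast; ring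
  rw [h, Real.cos_pi_div_two, Real.sin_pi_div_two]

lemma Epc_one : Epc 1 = ((-(Real.sqrt 3 / 2) : ℝ) : ℂ) + ((-(1/2) : ℝ) : ℂ) * Complex.I := by
  rw [Epc_eq]
  have h : π * (1/2 + (2/3) * ((1 : ℤ):ℝ)) = π/6 + π := by push_cast; ring
  rw [h, Real.cos_add_pi, Real.sin_add_pi, Real.cos_pi_div_six, Real.sin_pi_div_six]

lemma abs_sub_mk (x1 y1 x2 y2 : ℝ) :
    ‖(x1:ℂ) + (y1:ℝ)*Complex.I - ((x2:ℂ) + (y2:ℝ)*Complex.I)‖ =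
      Real.sqrt ((x1-x2)^2 + (y1-y2)^2) := by
  rw [Complex.norm_def, Complex.normSq_apply]
  congr 1
  simp
  ring

lemma sq3 : Real.sqrt 3 ^ 2 = 3 := Real.sq_sqrt (by norm_num)

set_option linter.unreachableTactic false in
set_option linter.unusedTactic false in
lemma Epc_abs_sub {a b : ℤ} (ha : a ∈ ({-1, 0, 1} : Set ℤ)) (hb : b ∈ ({-1, 0, 1} : Set ℤ))
    (hab : a ≠ b) : ‖Epc a - Epc b‖ = Real.sqrt 3 := by
  have h3 := sq3
  rcases ha with rfl | rfl | rfl <;> rcases hb with rfl | rfl | rfl <;>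
    first
    | exact absurd rfl hab
    | (rw [Epc_neg_one, Epc_zero, abs_sub_mk]; congr 1; nlinarith)
    | (rw [Epc_neg_one, Epc_one, abs_sub_mk]; congr 1; nlinarith)
    | (rw [Epc_zero, Epc_neg_one, abs_sub_mk]; congr 1; nlinarith)
    | (rw [Epc_zero, Epc_one, abs_sub_mk]; congr 1; nlinarith)
    | (rw [Epc_one, Epc_neg_one, abs_sub_mk]; congr 1; nlinarith)
    | (rw [Epc_one, Epc_zero, abs_sub_mk]; congr 1; nlinarith)

lemma tsum_third : ∑' k : ℕ, (3:ℝ) ^ (-((k:ℕ) + 1 : ℤ)) = 1/2 := by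
  have h : ∀ k : ℕ, (3:ℝ) ^ (-((k:ℕ) + 1 : ℤ)) = (1/3) * (1/3:ℝ)^k := by
    intro k
    rw [show (-((k:ℕ) + 1 : ℤ)) = -(((k+1:ℕ)):ℤ) by push_cast; ring, zpow_neg, zpow_natCast]
    rw [← inv_pow, pow_succ]
    norm_num
    ring
  rw [tsum_congr h, tsum_mul_left, tsum_geometric_of_lt_one (by norm_num) (by norm_num)]
  norm_num

theorem gasket_centers_separated (n : ℕ) (α β : Fin n → ℤ)
    (hα : ∀ i, α i ∈ ({-1, 0, 1} : Set ℤ)) (hβ : ∀ i, β i ∈ ({-1, 0, 1} : Set ℤ))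
    (hne : α ≠ β) :
    (‖zpt n α - zpt n β‖ ≥ 2 * (3:ℝ) ^ (-(n:ℤ)) →
      Disjoint (Metric.ball (zpt n α) ((3:ℝ) ^ (-(n:ℤ))))
        (Metric.ball (zpt n β) ((3:ℝ) ^ (-(n:ℤ))))) ∧
    (∀ j : Fin n, (∀ i : Fin n, i < j → α i = β i) → α j ≠ β j →
      ‖zpt n α - zpt n β‖ ≥
        Real.sqrt 3 * (3:ℝ) ^ (-((j:ℕ) + 1 : ℤ)) *
          (1 - ∑' k : ℕ, (3:ℝ) ^ (-((k:ℕ) + 1 : ℤ)))) ∧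
    zpt n α ≠ zpt n β := by
  -- the coefficient functions
  set c : Fin n → ℂ := fun k => ((1:ℂ)/3) ^ ((k:ℕ) + 1) * (Epc (α k) - Epc (β k)) with hc
  have hz : zpt n α - zpt n β = ∑ k : Fin n, c k := by
    rw [zpt, zpt, ← Finset.sum_sub_distrib]
    exact Finset.sum_congr rfl fun k _ => by rw [hc]; simp only [Epc]; ring
  have habs13 : ∀ m : ℕ, ‖((1:ℂ)/3) ^ m‖ = (1/3:ℝ)^m := by
    intro m
    rw [norm_pow]
    norm_num [map_div₀]
  have hck : ∀ k : Fin n, ‖c k‖ ≤ (1/3:ℝ)^(k.1+1) * Real.sqrt 3 := by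
    intro k
    rw [hc]
    simp only
    rw [norm_mul, habs13]
    by_cases h : α k = β k
    · rw [h, sub_self, norm_zero, mul_zero]
      positivity
    · rw [Epc_abs_sub (hα k) (hβ k) h]
  -- the main quantitative estimate
  have part2 : ∀ j : Fin n, (∀ i : Fin n, i < j → α i = β i) → α j ≠ β j →
      ‖zpt n α - zpt n β‖ ≥
        Real.sqrt 3 * (3:ℝ) ^ (-((j:ℕ) + 1 : ℤ)) *
          (1 - ∑' k : ℕ, (3:ℝ) ^ (-((k:ℕ) + 1 : ℤ))) := by
    intro j hlt hj
    have hcj : ‖c j‖ = (1/3:ℝ)^(j.1+1) * Real.sqrt 3 := by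
      rw [hc]; simp only
      rw [norm_mul, habs13, Epc_abs_sub (hα j) (hβ j) hj]
    set R : ℂ := ∑ k ∈ Finset.univ.erase j, c k with hR
    have hsplit : zpt n α - zpt n β = c j + R := by
      rw [hz, hR, Finset.add_sum_erase _ _ (Finset.mem_univ j)]
    -- bound on R
    have hRbound : ‖R‖ ≤ Real.sqrt 3 * ((1/3:ℝ)^(j.1+1) / 2) := by
      have h1 : ‖R‖ ≤ ∑ k ∈ Finset.univ.erase j, ‖c k‖ :=
        norm_sum_le _ _
      have h2 : ∑ k ∈ Finset.univ.erase j, ‖c k‖ ≤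
          ∑ k ∈ Finset.univ.erase j, (if j < k then Real.sqrt 3 * (1/3:ℝ)^(k.1+1) else 0) := by
        apply Finset.sum_le_sum
        intro k hk
        by_cases h : j < k
        · rw [if_pos h]
          calc ‖c k‖ ≤ (1/3:ℝ)^(k.1+1) * Real.sqrt 3 := hck k
            _ = Real.sqrt 3 * (1/3:ℝ)^(k.1+1) := by ring
        · rw [if_neg h]
          have hk' : k ≠ j := Finset.ne_of_mem_erase hk
          have : k < j := lt_of_le_of_ne (not_lt.mp h) hk'
          rw [hc]; simp only
          rw [hlt k this, sub_self, mul_zero, norm_zero]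
      have h3 : ∑ k ∈ Finset.univ.erase j, (if j < k then Real.sqrt 3 * (1/3:ℝ)^(k.1+1) else 0) ≤
          ∑ k : Fin n, (if j < k then Real.sqrt 3 * (1/3:ℝ)^(k.1+1) else 0) := by
        apply Finset.sum_le_sum_of_subset_of_nonneg (Finset.erase_subset _ _)
        intro k _ _
        by_cases h : j < k
        · rw [if_pos h]; positivity
        · rw [if_neg h]
      have h4 : ∑ k : Fin n, (if j < k then Real.sqrt 3 * (1/3:ℝ)^(k.1+1) else 0) =
          Real.sqrt 3 * ∑ k ∈ Finset.univ.filter (fun k : Fin n => j < k), (1/3:ℝ)^(k.1+1) := by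
        rw [Finset.mul_sum, Finset.sum_filter]
      have hmap : (Finset.univ.filter (fun k : Fin n => j < k)).image Fin.val
          = Finset.Ico (j.1+1) n := by
        ext i
        simp only [Finset.mem_image, Finset.mem_filter, Finset.mem_univ, true_and, Finset.mem_Ico]
        constructor
        · rintro ⟨k, hk, rfl⟩
          exact ⟨hk, k.isLt⟩
        · rintro ⟨h1, h2⟩
          exact ⟨⟨i, h2⟩, by simp [Fin.lt_def]; omega, rfl⟩
      have h5 : ∑ k ∈ Finset.univ.filter (fun k : Fin n => j < k), (1/3:ℝ)^(k.1+1)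
          = ∑ i ∈ Finset.Ico (j.1+1) n, (1/3:ℝ)^(i+1) := by
        rw [← hmap, Finset.sum_image (fun a _ b _ h => Fin.val_injective h)]
      have h6 : ∑ i ∈ Finset.Ico (j.1+1) n, (1/3:ℝ)^(i+1) ≤ (1/3:ℝ)^(j.1+1) / 2 := by
        have hg := geom_sum_Ico_le_of_lt_one (show (0:ℝ) ≤ 1/3 by norm_num)
            (show (1/3:ℝ) < 1 by norm_num) (m := j.1+1) (n := n)
        calc ∑ i ∈ Finset.Ico (j.1+1) n, (1/3:ℝ)^(i+1)
            = (1/3) * ∑ i ∈ Finset.Ico (j.1+1) n, (1/3:ℝ)^i := by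
              rw [Finset.mul_sum]; exact Finset.sum_congr rfl fun i _ => by ring
          _ ≤ (1/3) * ((1/3:ℝ)^(j.1+1) / (1 - 1/3)) := by linarith
          _ = (1/3:ℝ)^(j.1+1) / 2 := by ring
      have hs3 : (0:ℝ) ≤ Real.sqrt 3 := Real.sqrt_nonneg 3
      calc ‖R‖ ≤ Real.sqrt 3 * ∑ k ∈ Finset.univ.filter (fun k : Fin n => j < k), (1/3:ℝ)^(k.1+1) := by
            rw [← h4]; linarith
        _ ≤ Real.sqrt 3 * ((1/3:ℝ)^(j.1+1) / 2) := by
            rw [h5] at *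
            nlinarith
    -- combine
    have htri : ‖c j‖ ≤ ‖zpt n α - zpt n β‖ + ‖R‖ := by
      have h := norm_add_le (zpt n α - zpt n β) (-R)
      rw [hsplit] at h
      simp only [add_neg_cancel_right, norm_neg] at h
      rw [← hsplit] at h
      exact h
    have hzpow : (3:ℝ) ^ (-((j:ℕ) + 1 : ℤ)) = (1/3:ℝ)^(j.1+1) := by
      rw [show (-((j:ℕ) + 1 : ℤ)) = -(((j.1+1:ℕ)):ℤ) by push_cast; ring, zpow_neg, zpow_natCast]
      rw [← inv_pow]
      norm_num
    rw [tsum_third, hzpow]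
    have : Real.sqrt 3 * (1/3:ℝ)^(j.1+1) * (1 - 1/2) = (1/3:ℝ)^(j.1+1) * Real.sqrt 3 - Real.sqrt 3 * ((1/3:ℝ)^(j.1+1)/2) := by ring
    rw [this, ← hcj]
    linarith
  refine ⟨?_, part2, ?_⟩
  · intro h
    apply Metric.ball_disjoint_ball
    rw [Complex.dist_eq]
    linarith
  · -- find the first index where they differ
    have hex : ∃ i, α i ≠ β i := Function.ne_iff.mp hne
    set T : Finset (Fin n) := Finset.univ.filter (fun i => α i ≠ β i) with hT
    have hTne : T.Nonempty := by
      obtain ⟨i, hi⟩ := hex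
      exact ⟨i, by simp [hT, hi]⟩
    set j : Fin n := T.min' hTne with hjdef
    have hjT : j ∈ T := T.min'_mem hTne
    have hjne : α j ≠ β j := by
      have := hjT; rw [hT, Finset.mem_filter] at this; exact this.2
    have hlt : ∀ i : Fin n, i < j → α i = β i := by
      intro i hi
      by_contra hcon
      have : i ∈ T := by simp [hT, hcon]
      exact absurd (T.min'_le i this) (not_le.mpr hi)
    have hb := part2 j hlt hjne
    rw [tsum_third] at hb
    intro heq
    rw [heq, sub_self, norm_zero] at hb
    have h1 : (0:ℝ) < Real.sqrt 3 := Real.sqrt_pos.mpr (by norm_num)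
    have h2 : (0:ℝ) < (3:ℝ) ^ (-((j:ℕ) + 1 : ℤ)) := by positivity
    nlinarith
end
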